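/- For λ > −1 and t ∈ ℝ, the first moment of the generalised octic Freud weight satisfies ∫_{−∞}^{∞} |x|^{2λ+1} exp(−x⁸ + t x²) dx = ∫_0^{∞} s^{λ} exp(−s⁴ + t s) ds =: μ₀(t;λ); the function μ₀(·;λ) satisfies the fourth-order linear differential equation d⁴μ₀/dt⁴ − (t/4) dμ₀/dt − ((λ+1)/4) μ₀ = 0 on ℝ; and the first recurrence coefficient β₁(t;λ) = (dμ₀/dt)/μ₀ satisfies the third-order nonlinear equation β₁''' + 4 β₁ β₁'' + 3(β₁')² + 6 β₁² β₁' + β₁⁴ − (t/4) β₁ = (λ+1)/4 for all t ∈ ℝ, where primes denote differentiation with respect to t. -/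

import Mathlib

open MeasureTheory

private lemma ts_bound (t s : ℝ) (hs : 0 ≤ s) : t * s ≤ (1/2) * s ^ 4 + (|t|+2)^2 := by
  rcases le_or_gt s (|t| + 2) with h | h
  · nlinarith [abs_nonneg t, le_abs_self t, mul_le_mul_of_nonneg_right (le_abs_self t) hs,
      sq_nonneg s, sq_nonneg (s^2)]
  · have h2 : (2:ℝ) ≤ s := by have := abs_nonneg t; linarith
    nlinarith [le_abs_self t, sq_nonneg (s - 2), sq_nonneg s,
      mul_le_mul_of_nonneg_right (le_abs_self t) hs]

private lemma intAux (e t : ℝ) (he : -1 < e) :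
    IntegrableOn (fun s : ℝ => s ^ e * Real.exp (-s ^ 4 + t * s)) (Set.Ioi 0) := by
  have hg : IntegrableOn (fun s : ℝ => s ^ e * Real.exp (-(1/2) * s ^ (4:ℝ))) (Set.Ioi 0) :=
    integrableOn_rpow_mul_exp_neg_mul_rpow he (by norm_num) (by norm_num)
  have hg2 : IntegrableOn
      (fun s : ℝ => Real.exp ((|t|+2)^2) * (s ^ e * Real.exp (-(1/2) * s ^ (4:ℝ)))) (Set.Ioi 0) :=
    hg.const_mul _
  refine hg2.mono' ?_ ?_
  · apply AEStronglyMeasurable.mul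
    · exact (measurable_id.pow_const e).aestronglyMeasurable
    · exact (Real.continuous_exp.comp (by continuity)).aestronglyMeasurable
  · filter_upwards [ae_restrict_mem measurableSet_Ioi] with s hs
    have hs0 : (0:ℝ) < s := hs
    have h1 : s ^ e * Real.exp (-s ^ 4 + t * s) ≤
        Real.exp ((|t|+2)^2) * (s ^ e * Real.exp (-(1/2) * s ^ (4:ℝ))) := by
      rw [show ((4:ℝ)) = ((4:ℕ):ℝ) by norm_num, Real.rpow_natCast]
      rw [mul_comm (Real.exp _) _, mul_assoc, ← Real.exp_add]
      apply mul_le_mul_of_nonneg_left _ (Real.rpow_nonneg hs0.le e)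
      apply Real.exp_le_exp.mpr
      have := ts_bound t s hs0.le
      linarith
    have h0 : 0 ≤ s ^ e * Real.exp (-s ^ 4 + t * s) :=
      mul_nonneg (Real.rpow_nonneg hs0.le e) (Real.exp_nonneg _)
    rw [Real.norm_eq_abs, abs_of_nonneg h0]
    exact h1

private lemma derivAux (e t₀ : ℝ) (he : -1 < e) :
    HasDerivAt (fun t => ∫ s in Set.Ioi (0:ℝ), s ^ e * Real.exp (-s ^ 4 + t * s))
      (∫ s in Set.Ioi (0:ℝ), s ^ (e+1) * Real.exp (-s ^ 4 + t₀ * s)) t₀ := by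
  have meas : ∀ x : ℝ, AEStronglyMeasurable (fun s : ℝ => s ^ e * Real.exp (-s ^ 4 + x * s))
      (volume.restrict (Set.Ioi 0)) := fun x =>
    ((measurable_id.pow_const e).mul
      ((Real.continuous_exp.comp (by continuity)).measurable)).aestronglyMeasurable
  have key := hasDerivAt_integral_of_dominated_loc_of_deriv_le (s := Metric.ball t₀ 1)
    (μ := volume.restrict (Set.Ioi 0)) (x₀ := t₀)
    (F := fun x s => s ^ e * Real.exp (-s ^ 4 + x * s))
    (F' := fun x s => s ^ e * Real.exp (-s ^ 4 + x * s) * s)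
    (bound := fun s => s ^ (e+1) * Real.exp (-s ^ 4 + (|t₀|+1) * s))
    (Metric.ball_mem_nhds t₀ one_pos) (Filter.Eventually.of_forall meas) (intAux e t₀ he)
    (((measurable_id.pow_const e).mul
      ((Real.continuous_exp.comp (by continuity)).measurable)).mul
        measurable_id).aestronglyMeasurable
    ?_ (intAux (e+1) (|t₀|+1) (by linarith)) ?_
  · obtain ⟨-, hd⟩ := key
    have : (∫ s in Set.Ioi (0:ℝ), s ^ e * Real.exp (-s ^ 4 + t₀ * s) * s)
        = ∫ s in Set.Ioi (0:ℝ), s ^ (e+1) * Real.exp (-s ^ 4 + t₀ * s) := by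
      refine setIntegral_congr_fun measurableSet_Ioi (fun s hs => ?_)
      have hs0 : (0:ℝ) < s := hs
      rw [Real.rpow_add_one hs0.ne']
      ring
    rwa [this] at hd
  · filter_upwards [ae_restrict_mem measurableSet_Ioi] with s hs x hx
    have hs0 : (0:ℝ) < s := hs
    have hx' : x ≤ |t₀| + 1 := by
      have h1 := abs_lt.mp (by simpa [Real.dist_eq] using Metric.mem_ball.mp hx)
      have h2 := le_abs_self t₀; linarith [h1.1, h1.2]
    have hnn : 0 ≤ s ^ e * Real.exp (-s ^ 4 + x * s) * s :=
      mul_nonneg (mul_nonneg (Real.rpow_nonneg hs0.le e) (Real.exp_nonneg _)) hs0.le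
    rw [Real.norm_eq_abs, abs_of_nonneg hnn, Real.rpow_add_one hs0.ne']
    have : Real.exp (-s ^ 4 + x * s) ≤ Real.exp (-s ^ 4 + (|t₀|+1) * s) := by
      apply Real.exp_le_exp.mpr
      have := mul_le_mul_of_nonneg_right hx' hs0.le
      linarith
    calc s ^ e * Real.exp (-s ^ 4 + x * s) * s
        = s ^ e * s * Real.exp (-s ^ 4 + x * s) := by ring
      _ ≤ s ^ e * s * Real.exp (-s ^ 4 + (|t₀|+1) * s) := by
          apply mul_le_mul_of_nonneg_left this
          exact mul_nonneg (Real.rpow_nonneg hs0.le e) hs0.le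
  · filter_upwards [ae_restrict_mem measurableSet_Ioi] with s hs x _
    have : HasDerivAt (fun x : ℝ => Real.exp (-s ^ 4 + x * s))
        (Real.exp (-s ^ 4 + x * s) * s) x := by
      simpa using (((hasDerivAt_id x).mul_const s).const_add (-s ^ 4)).exp
    simpa [mul_assoc] using this.const_mul (s ^ e)

private lemma ibpAux (l t : ℝ) (hl : -1 < l) :
    4 * (∫ s in Set.Ioi (0:ℝ), s ^ (l+4) * Real.exp (-s ^ 4 + t * s))
      = (l+1) * (∫ s in Set.Ioi (0:ℝ), s ^ l * Real.exp (-s ^ 4 + t * s))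
        + t * (∫ s in Set.Ioi (0:ℝ), s ^ (l+1) * Real.exp (-s ^ 4 + t * s)) := by
  set f : ℝ → ℝ := fun s => s ^ (l+1) * Real.exp (-s ^ 4 + t * s) with hf
  set f' : ℝ → ℝ := fun s => (l+1) * (s ^ l * Real.exp (-s ^ 4 + t * s))
      + t * (s ^ (l+1) * Real.exp (-s ^ 4 + t * s))
      - 4 * (s ^ (l+4) * Real.exp (-s ^ 4 + t * s)) with hf'
  have hl1 : (0:ℝ) < l + 1 := by linarith
  have hderiv : ∀ s ∈ Set.Ioi (0:ℝ), HasDerivAt f (f' s) s := by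
    intro s hs
    have hs0 : (0:ℝ) < s := hs
    have h1 : HasDerivAt (fun x : ℝ => x ^ (l+1)) ((l+1) * s ^ l) s := by
      have := Real.hasDerivAt_rpow_const (x := s) (p := l+1) (Or.inl hs0.ne')
      simpa [add_sub_cancel_right] using this
    have h2 : HasDerivAt (fun x : ℝ => Real.exp (-x ^ 4 + t * x))
        (Real.exp (-s ^ 4 + t * s) * (-(4 * s ^ 3) + t)) s := by
      have hinner : HasDerivAt (fun x : ℝ => -x ^ 4 + t * x) (-(4 * s ^ 3) + t) s := by
        have := ((hasDerivAt_pow 4 s).neg).add ((hasDerivAt_id s).const_mul t)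
        refine this.congr_deriv ?_
        push_cast
        ring
      exact hinner.exp
    have h3 := h1.mul h2
    have hkey : s ^ (l+1) * s ^ (3:ℕ) = s ^ (l+4) := by
      rw [show (s:ℝ) ^ (3:ℕ) = s ^ ((3:ℕ):ℝ) from (Real.rpow_natCast s 3).symm,
        ← Real.rpow_add hs0, show l + 1 + (3:ℕ) = l + 4 by push_cast; ring]
    refine h3.congr_deriv ?_
    rw [hf']
    simp only []
    rw [← hkey]
    ring
  have hcont : ContinuousWithinAt f (Set.Ici (0:ℝ)) 0 := by
    apply ContinuousAt.continuousWithinAt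
    exact (Real.continuousAt_rpow_const 0 (l+1) (Or.inr hl1.le)).mul
      (Real.continuous_exp.comp (by continuity)).continuousAt
  have htop : Filter.Tendsto f Filter.atTop (nhds 0) := by
    have hg : Filter.Tendsto (fun s : ℝ => s ^ (l+1) * Real.exp (-1 * s)) Filter.atTop (nhds 0) :=
      tendsto_rpow_mul_exp_neg_mul_atTop_nhds_zero (l+1) 1 one_pos
    apply tendsto_of_tendsto_of_tendsto_of_le_of_le' (g := fun _ : ℝ => (0:ℝ))
      tendsto_const_nhds hg
    · filter_upwards [Filter.eventually_ge_atTop (0:ℝ)] with s hs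
      exact mul_nonneg (Real.rpow_nonneg hs _) (Real.exp_nonneg _)
    · filter_upwards [Filter.eventually_ge_atTop (|t|+2)] with s hs
      have hs2 : (2:ℝ) ≤ s := by have := abs_nonneg t; linarith
      have hexp : Real.exp (-s ^ 4 + t * s) ≤ Real.exp (-1 * s) := by
        apply Real.exp_le_exp.mpr
        have h1 : t * s ≤ |t| * s := mul_le_mul_of_nonneg_right (le_abs_self t) (by linarith)
        have h2 : |t| * s ≤ (s - 2) * s := mul_le_mul_of_nonneg_right (by linarith) (by linarith)
        nlinarith [sq_nonneg s, sq_nonneg (s - 1)]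
      exact mul_le_mul_of_nonneg_left hexp (Real.rpow_nonneg (by linarith) _)
  have hint : IntegrableOn f' (Set.Ioi (0:ℝ)) := by
    apply Integrable.sub
    · exact ((intAux l t hl).const_mul (l+1)).add ((intAux (l+1) t (by linarith)).const_mul t)
    · exact (intAux (l+4) t (by linarith)).const_mul 4
  have := integral_Ioi_of_hasDerivAt_of_tendsto hcont hderiv hint htop
  have hf0 : f 0 = 0 := by
    rw [hf]
    simp [Real.zero_rpow hl1.ne']
  rw [hf0, sub_zero] at this
  have hsplit : (∫ s in Set.Ioi (0:ℝ), f' s)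
      = (l+1) * (∫ s in Set.Ioi (0:ℝ), s ^ l * Real.exp (-s ^ 4 + t * s))
        + t * (∫ s in Set.Ioi (0:ℝ), s ^ (l+1) * Real.exp (-s ^ 4 + t * s))
        - 4 * (∫ s in Set.Ioi (0:ℝ), s ^ (l+4) * Real.exp (-s ^ 4 + t * s)) := by
    rw [hf']
    have hA : IntegrableOn (fun s : ℝ => (l+1) * (s ^ l * Real.exp (-s ^ 4 + t * s)))
        (Set.Ioi 0) := (intAux l t hl).const_mul (l+1)
    have hB : IntegrableOn (fun s : ℝ => t * (s ^ (l+1) * Real.exp (-s ^ 4 + t * s)))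
        (Set.Ioi 0) := (intAux (l+1) t (by linarith)).const_mul t
    have hAB : IntegrableOn (fun s : ℝ => (l+1) * (s ^ l * Real.exp (-s ^ 4 + t * s))
        + t * (s ^ (l+1) * Real.exp (-s ^ 4 + t * s))) (Set.Ioi 0) := hA.add hB
    have hC : IntegrableOn (fun s : ℝ => 4 * (s ^ (l+4) * Real.exp (-s ^ 4 + t * s)))
        (Set.Ioi 0) := (intAux (l+4) t (by linarith)).const_mul 4
    rw [integral_sub hAB hC, integral_add hA hB,
      MeasureTheory.integral_const_mul, MeasureTheory.integral_const_mul,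
      MeasureTheory.integral_const_mul]
  rw [hsplit] at this
  linarith

private lemma posAux (e t : ℝ) (he : -1 < e) :
    0 < ∫ s in Set.Ioi (0:ℝ), s ^ e * Real.exp (-s ^ 4 + t * s) := by
  rw [setIntegral_pos_iff_support_of_nonneg_ae ?_ (intAux e t he)]
  · apply lt_of_lt_of_le _ (measure_mono (?_ : Set.Ioi (0:ℝ) ⊆ _))
    · rw [Real.volume_Ioi]; exact ENNReal.zero_lt_top
    · intro s hs
      refine ⟨?_, hs⟩
      have hs0 : (0:ℝ) < s := hs
      exact ne_of_gt (mul_pos (Real.rpow_pos_of_pos hs0 e) (Real.exp_pos _))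
  · filter_upwards [ae_restrict_mem measurableSet_Ioi] with s hs
    have hs0 : (0:ℝ) < s := hs
    exact (mul_pos (Real.rpow_pos_of_pos hs0 e) (Real.exp_pos _)).le

private lemma momentAux (l t : ℝ) :
    (∫ x : ℝ, |x| ^ (2 * l + 1) * Real.exp (-x ^ 8 + t * x ^ 2))
      = ∫ s in Set.Ioi (0:ℝ), s ^ l * Real.exp (-s ^ 4 + t * s) := by
  have h1 : (fun x : ℝ => |x| ^ (2 * l + 1) * Real.exp (-x ^ 8 + t * x ^ 2))
      = fun x : ℝ => (fun y : ℝ => y ^ (2 * l + 1) * Real.exp (-y ^ 8 + t * y ^ 2)) |x| := by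
    funext x
    simp only []
    rw [show |x| ^ (8:ℕ) = x ^ (8:ℕ) by rw [← abs_pow]; exact abs_of_nonneg (by positivity),
      show |x| ^ (2:ℕ) = x ^ (2:ℕ) by rw [← abs_pow]; exact abs_of_nonneg (by positivity)]
  rw [h1, integral_comp_abs (f := fun y : ℝ => y ^ (2 * l + 1) * Real.exp (-y ^ 8 + t * y ^ 2))]
  have h2 : (∫ x in Set.Ioi (0:ℝ), x ^ (2 * l + 1) * Real.exp (-x ^ 8 + t * x ^ 2))
      = ∫ x in Set.Ioi (0:ℝ), (1/2 : ℝ) * ((2 * x ^ ((2:ℝ) - 1)) •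
          ((fun y : ℝ => y ^ l * Real.exp (-y ^ 4 + t * y)) (x ^ (2:ℝ)))) := by
    refine setIntegral_congr_fun measurableSet_Ioi (fun x hx => ?_)
    have hx0 : (0:ℝ) < x := hx
    have e1 : x ^ ((2:ℝ) - 1) = x := by norm_num
    have e2 : x ^ ((2:ℝ)) = x ^ (2:ℕ) := by
      rw [show ((2:ℝ)) = ((2:ℕ):ℝ) by norm_num, Real.rpow_natCast]
    have e3 : (x ^ (2:ℕ)) ^ l = x ^ (2 * l) := by
      rw [← Real.rpow_natCast x 2, ← Real.rpow_mul hx0.le]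
      norm_num
    have e4 : (x ^ (2:ℕ)) ^ (4:ℕ) = x ^ (8:ℕ) := by ring
    have e5 : x ^ (2 * l) * x = x ^ (2 * l + 1) := by
      rw [← Real.rpow_add_one hx0.ne' (2*l)]
    simp only [smul_eq_mul, e1, e2, e3, e4]
    rw [← e5]
    ring
  rw [h2, MeasureTheory.integral_const_mul,
    integral_comp_rpow_Ioi_of_pos (g := fun y : ℝ => y ^ l * Real.exp (-y ^ 4 + t * y)) two_pos]
  ring

private noncomputable def MM (l : ℝ) (n : ℕ) (t : ℝ) : ℝ :=
  ∫ s in Set.Ioi (0:ℝ), s ^ (l + n) * Real.exp (-s ^ 4 + t * s)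

private lemma MM_hasDerivAt (l : ℝ) (hl : -1 < l) (n : ℕ) (t : ℝ) :
    HasDerivAt (MM l n) (MM l (n+1) t) t := by
  have hle : (-1:ℝ) < l + n := by
    have : (0:ℝ) ≤ n := Nat.cast_nonneg n
    linarith
  have h : MM l (n+1) t
      = ∫ s in Set.Ioi (0:ℝ), s ^ ((l + n) + 1) * Real.exp (-s ^ 4 + t * s) := by
    unfold MM
    rw [show l + ((n+1:ℕ):ℝ) = (l + (n:ℝ)) + 1 by push_cast; ring]
  rw [h]
  exact derivAux (l + n) t hle

private lemma MM_deriv (l : ℝ) (hl : -1 < l) (n : ℕ) :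
    deriv (MM l n) = MM l (n+1) :=
  funext fun t => (MM_hasDerivAt l hl n t).deriv

private noncomputable def GG1 (l t : ℝ) : ℝ :=
  (MM l 2 t * MM l 0 t - MM l 1 t * MM l 1 t) / (MM l 0 t) ^ 2

private noncomputable def GG2 (l t : ℝ) : ℝ :=
  (MM l 3 t * (MM l 0 t) ^ 2 - 3 * MM l 2 t * MM l 1 t * MM l 0 t + 2 * (MM l 1 t) ^ 3)
    / (MM l 0 t) ^ 3

private noncomputable def GG3 (l t : ℝ) : ℝ :=
  (MM l 4 t * (MM l 0 t) ^ 3 - (4 * MM l 3 t * MM l 1 t + 3 * (MM l 2 t) ^ 2) * (MM l 0 t) ^ 2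
      + 12 * MM l 2 t * (MM l 1 t) ^ 2 * MM l 0 t - 6 * (MM l 1 t) ^ 4) / (MM l 0 t) ^ 4

private lemma MM0_pos (l : ℝ) (hl : -1 < l) (t : ℝ) : 0 < MM l 0 t := by
  unfold MM
  simpa using posAux (l + ((0:ℕ):ℝ)) t (by push_cast; linarith)

private lemma hasDeriv_beta (l : ℝ) (hl : -1 < l) (t : ℝ) :
    HasDerivAt (fun t => MM l 1 t / MM l 0 t) (GG1 l t) t :=
  (MM_hasDerivAt l hl 1 t).div (MM_hasDerivAt l hl 0 t) (MM0_pos l hl t).ne'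

private lemma hasDeriv_GG1 (l : ℝ) (hl : -1 < l) (t : ℝ) :
    HasDerivAt (GG1 l ·) (GG2 l t) t := by
  have hne := (MM0_pos l hl t).ne'
  have hnum : HasDerivAt (fun t => MM l 2 t * MM l 0 t - MM l 1 t * MM l 1 t)
      (MM l 3 t * MM l 0 t + MM l 2 t * MM l 1 t - (MM l 2 t * MM l 1 t + MM l 1 t * MM l 2 t))
      t := ((MM_hasDerivAt l hl 2 t).mul (MM_hasDerivAt l hl 0 t)).sub
        ((MM_hasDerivAt l hl 1 t).mul (MM_hasDerivAt l hl 1 t))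
  have hden : HasDerivAt (fun t => (MM l 0 t) ^ 2)
      (((2:ℕ):ℝ) * (MM l 0 t) ^ (2-1) * MM l 1 t) t := (MM_hasDerivAt l hl 0 t).pow 2
  have h := hnum.div hden (pow_ne_zero 2 hne)
  refine h.congr_deriv ?_
  unfold GG2
  field_simp
  ring

private lemma hasDeriv_GG2 (l : ℝ) (hl : -1 < l) (t : ℝ) :
    HasDerivAt (GG2 l ·) (GG3 l t) t := by
  have hne := (MM0_pos l hl t).ne'
  have hnum : HasDerivAt
      (fun t => MM l 3 t * (MM l 0 t) ^ 2 - 3 * MM l 2 t * MM l 1 t * MM l 0 t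
        + 2 * (MM l 1 t) ^ 3)
      (MM l 4 t * (MM l 0 t) ^ 2
          + MM l 3 t * (((2:ℕ):ℝ) * (MM l 0 t) ^ (2-1) * MM l 1 t)
        - ((3 * MM l 3 t * MM l 1 t + 3 * MM l 2 t * MM l 2 t) * MM l 0 t
            + 3 * MM l 2 t * MM l 1 t * MM l 1 t)
        + 2 * (((3:ℕ):ℝ) * (MM l 1 t) ^ (3-1) * MM l 2 t)) t := by
    refine HasDerivAt.add ?_ (((MM_hasDerivAt l hl 1 t).pow 3).const_mul 2)
    refine HasDerivAt.sub ((MM_hasDerivAt l hl 3 t).mul ((MM_hasDerivAt l hl 0 t).pow 2)) ?_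
    have := ((((MM_hasDerivAt l hl 2 t).const_mul 3).mul (MM_hasDerivAt l hl 1 t)).mul
      (MM_hasDerivAt l hl 0 t))
    exact this
  have hden : HasDerivAt (fun t => (MM l 0 t) ^ 3)
      (((3:ℕ):ℝ) * (MM l 0 t) ^ (3-1) * MM l 1 t) t := (MM_hasDerivAt l hl 0 t).pow 3
  have h := hnum.div hden (pow_ne_zero 3 hne)
  refine h.congr_deriv ?_
  unfold GG3
  field_simp
  ring

theorem octic_freud_moment_and_beta_one (l : ℝ) (hl : -1 < l)
    (μ₀ β₁ : ℝ → ℝ)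
    (hμ₀ : ∀ t : ℝ, μ₀ t = ∫ s in Set.Ioi (0 : ℝ), s ^ l * Real.exp (-s ^ 4 + t * s))
    (hβ₁ : ∀ t : ℝ, β₁ t = deriv μ₀ t / μ₀ t) :
    (∀ t : ℝ, (∫ x : ℝ, |x| ^ (2 * l + 1) * Real.exp (-x ^ 8 + t * x ^ 2)) = μ₀ t) ∧
    (∀ t : ℝ, iteratedDeriv 4 μ₀ t - t / 4 * deriv μ₀ t - (l + 1) / 4 * μ₀ t = 0) ∧
    (∀ t : ℝ, iteratedDeriv 3 β₁ t + 4 * β₁ t * iteratedDeriv 2 β₁ t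
        + 3 * (deriv β₁ t) ^ 2 + 6 * (β₁ t) ^ 2 * deriv β₁ t + (β₁ t) ^ 4
        - t / 4 * β₁ t = (l + 1) / 4) := by
  have hM0 : μ₀ = MM l 0 := by
    funext t
    rw [hμ₀]
    unfold MM
    norm_num
  have hiter : ∀ k : ℕ, iteratedDeriv k μ₀ = MM l k := by
    intro k
    induction k with
    | zero => simpa [iteratedDeriv_zero] using hM0
    | succ n ih => rw [iteratedDeriv_succ, ih, MM_deriv l hl]
  have hd1 : deriv μ₀ = MM l 1 := by rw [hM0, MM_deriv l hl]
  have ibp : ∀ t : ℝ, 4 * MM l 4 t = (l+1) * MM l 0 t + t * MM l 1 t := by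
    intro t
    have h := ibpAux l t hl
    unfold MM
    simp only [show l + ((4:ℕ):ℝ) = l + 4 by norm_num, show l + ((1:ℕ):ℝ) = l + 1 by norm_num,
      show l + ((0:ℕ):ℝ) = l by norm_num]
    exact h
  refine ⟨fun t => by rw [momentAux l t, hμ₀], fun t => ?_, fun t => ?_⟩
  · rw [hiter 4, hd1, hM0]
    have := ibp t
    linarith
  · have hne : ∀ t : ℝ, MM l 0 t ≠ 0 := fun t => (MM0_pos l hl t).ne'
    have hbfun : β₁ = fun t => MM l 1 t / MM l 0 t := by
      funext t
      rw [hβ₁, hd1, hM0]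
    have hdb : deriv β₁ = GG1 l := by
      funext t
      rw [hbfun]
      exact (hasDeriv_beta l hl t).deriv
    have i2 : iteratedDeriv 2 β₁ = (GG2 l ·) := by
      rw [show (2:ℕ) = 1 + 1 from rfl, iteratedDeriv_succ, iteratedDeriv_one, hdb]
      funext t
      exact (hasDeriv_GG1 l hl t).deriv
    have i3 : iteratedDeriv 3 β₁ = (GG3 l ·) := by
      rw [show (3:ℕ) = 2 + 1 from rfl, iteratedDeriv_succ, i2]
      funext t
      exact (hasDeriv_GG2 l hl t).deriv
    rw [i3, i2, hdb, hbfun]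
    simp only []
    have key : MM l 4 t = ((l+1) * MM l 0 t + t * MM l 1 t) / 4 := by linarith [ibp t]
    unfold GG3 GG2 GG1
    rw [key]
    field_simp
    have h1 : MM l 0 t ^ 4 * (MM l 0 t)⁻¹ ^ 4 = 1 := by
      rw [← mul_pow, mul_inv_cancel₀ (hne t), one_pow]
    have h2 : MM l 0 t ^ 3 * (MM l 0 t)⁻¹ ^ 4 = (MM l 0 t)⁻¹ := by
      rw [show (4:ℕ) = 3 + 1 from rfl, pow_succ (MM l 0 t)⁻¹ 3, ← mul_assoc, ← mul_pow,
        mul_inv_cancel₀ (hne t), one_pow, one_mul]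
    linear_combination (l + 1) * h1
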